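/- Let G be a disperse ℓ-uniform hypergraph (ℓ ≥ 3) and let e₁,…,e_m be a tight walk in G. Then all (ℓ−1)-subsets of the union e₁ ∪ … ∪ e_m belong to the same tight component of G. -/

import Mathlib

open Finset

/-- An `ℓ`-uniform hypergraph (given by its edge set `E`) is disperse if every
`(ℓ+1)`-set of vertices induces `0`, `1`, `ℓ` or `ℓ+1` edges. -/
def Disperse {V : Type*} [DecidableEq V] (ℓ : ℕ) (E : Finset (Finset V)) : Prop :=
  ∀ X : Finset V, X.card = ℓ + 1 →
    (E.filter (· ⊆ X)).card = 0 ∨ (E.filter (· ⊆ X)).card = 1 ∨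
    (E.filter (· ⊆ X)).card = ℓ ∨ (E.filter (· ⊆ X)).card = ℓ + 1

/-- Edge set of the link of a vertex `v`: all `(ℓ-1)`-sets `e` with `e ∪ {v} ∈ E`. -/
def linkEdges {V : Type*} [DecidableEq V] (E : Finset (Finset V)) (v : V) :
    Finset (Finset V) :=
  (E.filter (fun e => v ∈ e)).image (fun e => e.erase v)

/-- `A` and `B` are connected by a tight walk in the `k`-uniform hypergraph with
edge set `E`: there is a sequence of edges, consecutive ones sharing at least
`k - 1` vertices, whose first edge contains `A` and last edge contains `B`. -/
def TightConn {V : Type*} [DecidableEq V] (k : ℕ) (E : Finset (Finset V))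
    (A B : Finset V) : Prop :=
  ∃ es : List (Finset V), ∃ h : es ≠ [],
    (∀ e ∈ es, e ∈ E) ∧ es.Chain' (fun a b => k - 1 ≤ (a ∩ b).card) ∧
    A ⊆ es.head h ∧ B ⊆ es.getLast h

set_option maxHeartbeats 1000000
set_option linter.unusedSectionVars false
set_option linter.unusedVariables false
namespace TWProof

variable {V : Type*} [DecidableEq V]

/-- `X` is a "full" `(ℓ+1)`-set: among its `ℓ`-subsets, at most one is a non-edge. -/
def Full (ℓ : ℕ) (E : Finset (Finset V)) (X : Finset V) : Prop :=
  X.card = ℓ + 1 ∧ ∀ S S' : Finset V, S ⊆ X → S' ⊆ X → S.card = ℓ → S'.card = ℓ →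
    S ≠ S' → S ∈ E ∨ S' ∈ E

variable {ℓ : ℕ} {E : Finset (Finset V)}

lemma full_of_two_edges (hunif : ∀ e ∈ E, e.card = ℓ)
    (hdisp : Disperse ℓ E) {g₁ g₂ X : Finset V}
    (hg₁ : g₁ ∈ E) (hg₂ : g₂ ∈ E) (h₁ : g₁ ⊆ X) (h₂ : g₂ ⊆ X) (hne : g₁ ≠ g₂)
    (hX : X.card = ℓ + 1) : Full ℓ E X := by
  refine ⟨hX, ?_⟩
  have hfilter : E.filter (· ⊆ X) = (X.powersetCard ℓ).filter (· ∈ E) := by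
    ext e
    simp only [mem_filter, mem_powersetCard]
    exact ⟨fun ⟨he, hs⟩ => ⟨⟨hs, hunif e he⟩, he⟩, fun ⟨⟨hs, _⟩, he⟩ => ⟨he, hs⟩⟩
  have hpcard : (X.powersetCard ℓ).card = ℓ + 1 := by
    rw [card_powersetCard, hX, Nat.choose_succ_self_right]
  have h2le : 2 ≤ (E.filter (· ⊆ X)).card := by
    have hsub : ({g₁, g₂} : Finset (Finset V)) ⊆ E.filter (· ⊆ X) := by
      intro t ht
      rcases mem_insert.mp ht with rfl | ht
      · exact mem_filter.mpr ⟨hg₁, h₁⟩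
      · rw [mem_singleton.mp ht]; exact mem_filter.mpr ⟨hg₂, h₂⟩
    calc 2 = ({g₁, g₂} : Finset (Finset V)).card := by
              rw [card_insert_of_notMem (by simpa using hne), card_singleton]
      _ ≤ _ := card_le_card hsub
  have hge : ℓ ≤ (E.filter (· ⊆ X)).card := by
    rcases hdisp X hX with h | h | h | h <;> omega
  intro S S' hS hS' hSc hS'c hSS'
  by_contra hcon
  push_neg at hcon
  obtain ⟨hSE, hS'E⟩ := hcon
  have hsub2 : E.filter (· ⊆ X) ⊆ (X.powersetCard ℓ) \ {S, S'} := by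
    rw [hfilter]
    intro t ht
    rw [mem_filter] at ht
    rw [mem_sdiff]
    refine ⟨ht.1, ?_⟩
    intro hmem
    rcases mem_insert.mp hmem with rfl | hm
    · exact hSE ht.2
    · rw [mem_singleton.mp hm] at ht; exact hS'E ht.2
  have hcard2 : (((X.powersetCard ℓ) : Finset (Finset V)) \ {S, S'}).card = ℓ - 1 := by
    rw [card_sdiff_of_subset]
    · rw [hpcard, card_insert_of_notMem (by simpa using hSS'), card_singleton]; omega
    · intro t ht
      rcases mem_insert.mp ht with rfl | hm
      · exact mem_powersetCard.mpr ⟨hS, hSc⟩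
      · rw [mem_singleton.mp hm]; exact mem_powersetCard.mpr ⟨hS', hS'c⟩
  have h3 := card_le_card hsub2
  rw [hcard2] at h3
  omega

lemma Full.pair {X : Finset V} (hX : Full ℓ E X) {S S' : Finset V}
    (hS : S ⊆ X) (hS' : S' ⊆ X) (hSc : S.card = ℓ) (hS'c : S'.card = ℓ)
    (hne : S ≠ S') (hSE : S ∉ E) : S' ∈ E := by
  rcases hX.2 S S' hS hS' hSc hS'c hne with h | h
  · exact absurd h hSE
  · exact h

lemma cover_of_full (hℓ : 3 ≤ ℓ) {X A : Finset V} (hX : Full ℓ E X)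
    (hA : A ⊆ X) (hAc : A.card = ℓ - 1) : ∃ g ∈ E, A ⊆ g ∧ g ⊆ X := by
  have hsd : (X \ A).card = 2 := by
    rw [card_sdiff_of_subset hA, hX.1]; omega
  obtain ⟨x, y, hxy, hxyeq⟩ := card_eq_two.mp hsd
  have hx : x ∈ X \ A := by rw [hxyeq]; simp
  have hy : y ∈ X \ A := by rw [hxyeq]; simp
  rw [mem_sdiff] at hx hy
  have hSc : (insert x A).card = ℓ := by
    rw [card_insert_of_notMem hx.2, hAc]; omega
  have hS'c : (insert y A).card = ℓ := by
    rw [card_insert_of_notMem hy.2, hAc]; omega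
  have hne : insert x A ≠ insert y A := by
    intro h
    have : x ∈ insert y A := h ▸ mem_insert_self x A
    rcases mem_insert.mp this with rfl | hxa
    · exact hxy rfl
    · exact hx.2 hxa
  rcases hX.2 _ _ (insert_subset hx.1 hA) (insert_subset hy.1 hA) hSc hS'c hne with h | h
  · exact ⟨_, h, subset_insert x A, insert_subset hx.1 hA⟩
  · exact ⟨_, h, subset_insert y A, insert_subset hy.1 hA⟩

lemma inter_ge_in_full {X S S' : Finset V} (hX : X.card = ℓ + 1)
    (hS : S ⊆ X) (hS' : S' ⊆ X) (hSc : S.card = ℓ) (hS'c : S'.card = ℓ) :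
    ℓ - 1 ≤ (S ∩ S').card := by
  have h1 : (S ∪ S').card ≤ ℓ + 1 := hX ▸ card_le_card (union_subset hS hS')
  have h2 := card_union_add_card_inter S S'
  omega

lemma not_full_insert (hunif : ∀ e ∈ E, e.card = ℓ) (hdisp : Disperse ℓ E)
    {g : Finset V} {v : V} (hg : g ∈ E) (hvg : v ∉ g) (hgc : g.card = ℓ)
    (hnf : ¬ Full ℓ E (insert v g)) {S : Finset V}
    (hS : S ⊆ insert v g) (hSc : S.card = ℓ) (hSne : S ≠ g) : S ∉ E := by
  intro hSE
  exact hnf (full_of_two_edges hunif hdisp hSE hg hS (subset_insert v g) hSne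
    (by rw [card_insert_of_notMem hvg, hgc]))

lemma inter_card_of_ne (hunif : ∀ e ∈ E, e.card = ℓ) {f g : Finset V}
    (hf : f ∈ E) (hg : g ∈ E) (hne : f ≠ g) (hfg : ℓ - 1 ≤ (f ∩ g).card) :
    (f ∩ g).card = ℓ - 1 := by
  have hle : (f ∩ g).card ≤ ℓ := (hunif f hf) ▸ card_le_card inter_subset_left
  rcases Nat.lt_or_ge (f ∩ g).card ℓ with h | h
  · omega
  · exfalso
    have : f ∩ g = f := eq_of_subset_of_card_le inter_subset_left (by rw [hunif f hf]; omega)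
    have hsub : f ⊆ g := this ▸ inter_subset_right
    exact hne (eq_of_subset_of_card_le hsub (by rw [hunif f hf, hunif g hg]))

lemma pair_decomp (hℓ : 3 ≤ ℓ) (hunif : ∀ e ∈ E, e.card = ℓ) {f g : Finset V}
    (hf : f ∈ E) (hg : g ∈ E) (hne : f ≠ g) (hfg : ℓ - 1 ≤ (f ∩ g).card) :
    ∃ a, a ∉ g ∧ a ∉ f ∩ g ∧ f = insert a (f ∩ g) := by
  have hT := inter_card_of_ne hunif hf hg hne hfg
  have hsd : (f \ g).card = 1 := by
    have h1 := card_inter_add_card_sdiff f g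
    have h2 := hunif f hf
    omega
  obtain ⟨a, ha⟩ := card_eq_one.mp hsd
  have haf : a ∈ f \ g := ha ▸ mem_singleton_self a
  rw [mem_sdiff] at haf
  refine ⟨a, haf.2, by simp [haf.2], ?_⟩
  have : f ∩ g ∪ f \ g = f := by ext u; simp [mem_inter, mem_sdiff]; tauto
  rw [← this, ha]
  ext u; simp [mem_insert, mem_union]; tauto

lemma core_q (hℓ : 3 ≤ ℓ) (hunif : ∀ e ∈ E, e.card = ℓ) (hdisp : Disperse ℓ E)
    {T : Finset V} {a c v : V}
    (hT : T.card = ℓ - 1) (haT : a ∉ T) (hcT : c ∉ T) (hvT : v ∉ T)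
    (hac : a ≠ c) (hva : v ≠ a) (hvc : v ≠ c)
    (hgE : insert c T ∈ E)
    (hX : Full ℓ E (insert v (insert a T)))
    (hng : ¬ Full ℓ E (insert v (insert c T)))
    {x : V} (hx : x ∈ T) : insert a (insert v (T.erase x)) ∈ E := by
  have hvg : v ∉ insert c T := by simp [mem_insert, hvc, hvT]
  have halpha : insert v T ∉ E := by
    refine not_full_insert hunif hdisp hgE hvg (hunif _ hgE) hng
      (insert_subset_insert v (subset_insert c T)) ?_ ?_
    · rw [card_insert_of_notMem hvT, hT]; omega
    · intro heq
      have : v ∈ insert c T := heq ▸ mem_insert_self v T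
      exact hvg this
  refine hX.pair (S := insert v T) ?_ ?_ ?_ ?_ ?_ halpha
  · exact insert_subset_insert v (subset_insert a T)
  · intro u hu
    simp only [mem_insert, mem_erase] at hu ⊢
    tauto
  · rw [card_insert_of_notMem hvT, hT]; omega
  · have h1 : v ∉ T.erase x := fun h => hvT (mem_of_mem_erase h)
    have h2 : a ∉ insert v (T.erase x) := by
      simp only [mem_insert, mem_erase]
      push_neg
      exact ⟨fun h => hva h.symm, fun _ h => haT h⟩
    rw [card_insert_of_notMem h2, card_insert_of_notMem h1, card_erase_of_mem hx, hT]
    omega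
  · intro heq
    have : a ∈ insert v T := heq ▸ mem_insert_self a _
    simp only [mem_insert] at this
    rcases this with h | h
    · exact hva h.symm
    · exact haT h

lemma core_K (hℓ : 3 ≤ ℓ) (hunif : ∀ e ∈ E, e.card = ℓ) (hdisp : Disperse ℓ E)
    {T : Finset V} {a c v : V}
    (hT : T.card = ℓ - 1) (haT : a ∉ T) (hcT : c ∉ T) (hvT : v ∉ T)
    (hac : a ≠ c) (hva : v ≠ a) (hvc : v ≠ c)
    (hgE : insert c T ∈ E)
    (hX : Full ℓ E (insert v (insert a T)))
    (hng : ¬ Full ℓ E (insert v (insert c T)))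
    {x x' : V} (hx : x ∈ T) (hx' : x' ∈ T) (hxx' : x ≠ x')
    (hβ : insert a (insert c (T.erase x)) ∈ E) :
    insert v (insert a (insert c ((T.erase x).erase x'))) ∈ E := by
  have hq := core_q hℓ hunif hdisp hT haT hcT hvT hac hva hvc hgE hX hng hx
  have hvg : v ∉ insert c T := by simp [mem_insert, hvc, hvT]
  have hvβ : v ∉ insert a (insert c (T.erase x)) := by
    simp only [mem_insert, mem_erase]
    push_neg
    exact ⟨hva, hvc, fun _ h => hvT h⟩
  have hβc : (insert a (insert c (T.erase x))).card = ℓ := by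
    have h1 : c ∉ T.erase x := fun h => hcT (mem_of_mem_erase h)
    have h2 : a ∉ insert c (T.erase x) := by
      simp only [mem_insert, mem_erase]
      push_neg
      exact ⟨hac, fun _ h => haT h⟩
    rw [card_insert_of_notMem h2, card_insert_of_notMem h1, card_erase_of_mem hx, hT]
    omega
  have hG : Full ℓ E (insert v (insert a (insert c (T.erase x)))) := by
    refine full_of_two_edges hunif hdisp hβ hq (subset_insert _ _) ?_ ?_ ?_
    · intro u hu
      simp only [mem_insert, mem_erase] at hu ⊢
      tauto
    · intro heq
      have : c ∈ insert a (insert v (T.erase x)) := by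
        rw [← heq]; simp [mem_insert]
      simp only [mem_insert, mem_erase] at this
      rcases this with h | h | h
      · exact hac h.symm
      · exact hvc h.symm
      · exact hcT h.2
    · rw [card_insert_of_notMem hvβ, hβc]
  have hγ : insert v (insert c (T.erase x)) ∉ E := by
    refine not_full_insert hunif hdisp hgE hvg (hunif _ hgE) hng ?_ ?_ ?_
    · intro u hu
      simp only [mem_insert, mem_erase] at hu ⊢
      tauto
    · have h1 : c ∉ T.erase x := fun h => hcT (mem_of_mem_erase h)
      have h2 : v ∉ insert c (T.erase x) := by
        simp only [mem_insert, mem_erase]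
        push_neg
        exact ⟨hvc, fun _ h => hvT h⟩
      rw [card_insert_of_notMem h2, card_insert_of_notMem h1, card_erase_of_mem hx, hT]
      omega
    · intro heq
      have : v ∈ insert c T := heq ▸ mem_insert_self v _
      exact hvg this
  refine hG.pair (S := insert v (insert c (T.erase x))) ?_ ?_ ?_ ?_ ?_ hγ
  · intro u hu
    simp only [mem_insert, mem_erase] at hu ⊢
    tauto
  · intro u hu
    simp only [mem_insert, mem_erase] at hu ⊢
    tauto
  · have h1 : c ∉ T.erase x := fun h => hcT (mem_of_mem_erase h)
    have h2 : v ∉ insert c (T.erase x) := by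
      simp only [mem_insert, mem_erase]
      push_neg
      exact ⟨hvc, fun _ h => hvT h⟩
    rw [card_insert_of_notMem h2, card_insert_of_notMem h1, card_erase_of_mem hx, hT]
    omega
  · have hx'e : x' ∈ T.erase x := mem_erase.mpr ⟨hxx'.symm, hx'⟩
    have h0 : c ∉ (T.erase x).erase x' := fun h => hcT (mem_of_mem_erase (mem_of_mem_erase h))
    have h1 : a ∉ insert c ((T.erase x).erase x') := by
      simp only [mem_insert, mem_erase]
      push_neg
      exact ⟨hac, fun _ _ h => haT h⟩
    have h2 : v ∉ insert a (insert c ((T.erase x).erase x')) := by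
      simp only [mem_insert, mem_erase]
      push_neg
      exact ⟨hva, hvc, fun _ _ h => hvT h⟩
    rw [card_insert_of_notMem h2, card_insert_of_notMem h1, card_insert_of_notMem h0,
      card_erase_of_mem hx'e, card_erase_of_mem hx, hT]
    omega
  · intro heq
    have : a ∈ insert v (insert c (T.erase x)) := by
      rw [heq]; simp [mem_insert]
    simp only [mem_insert, mem_erase] at this
    rcases this with h | h | h
    · exact hva h.symm
    · exact hac h
    · exact haT h.2

lemma core_G (hℓ : 3 ≤ ℓ) (hunif : ∀ e ∈ E, e.card = ℓ) (hdisp : Disperse ℓ E)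
    {T : Finset V} {a c v : V}
    (hT : T.card = ℓ - 1) (haT : a ∉ T) (hcT : c ∉ T) (hvT : v ∉ T)
    (hac : a ≠ c) (hva : v ≠ a) (hvc : v ≠ c)
    (hgE : insert c T ∈ E)
    (hX : Full ℓ E (insert v (insert a T)))
    (hng : ¬ Full ℓ E (insert v (insert c T)))
    {x : V} (hx : x ∈ T)
    (hβ : insert a (insert c (T.erase x)) ∈ E) :
    Full ℓ E (insert v (insert a (insert c (T.erase x)))) := by
  have hq := core_q hℓ hunif hdisp hT haT hcT hvT hac hva hvc hgE hX hng hx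
  have hvβ : v ∉ insert a (insert c (T.erase x)) := by
    simp only [mem_insert, mem_erase]
    push_neg
    exact ⟨hva, hvc, fun _ h => hvT h⟩
  have hβc : (insert a (insert c (T.erase x))).card = ℓ := by
    have h1 : c ∉ T.erase x := fun h => hcT (mem_of_mem_erase h)
    have h2 : a ∉ insert c (T.erase x) := by
      simp only [mem_insert, mem_erase]
      push_neg
      exact ⟨hac, fun _ h => haT h⟩
    rw [card_insert_of_notMem h2, card_insert_of_notMem h1, card_erase_of_mem hx, hT]
    omega
  refine full_of_two_edges hunif hdisp hβ hq (subset_insert _ _) ?_ ?_ ?_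
  · intro u hu
    simp only [mem_insert, mem_erase] at hu ⊢
    tauto
  · intro heq
    have : c ∈ insert a (insert v (T.erase x)) := by
      rw [← heq]; simp [mem_insert]
    simp only [mem_insert, mem_erase] at this
    rcases this with h | h | h
    · exact hac h.symm
    · exact hvc h.symm
    · exact hcT h.2
  · rw [card_insert_of_notMem hvβ, hβc]

lemma lam_step (hℓ : 3 ≤ ℓ) (hunif : ∀ e ∈ E, e.card = ℓ) (hdisp : Disperse ℓ E)
    {e e' f : Finset V} {v : V}
    (he : e ∈ E) (he' : e' ∈ E) (hee' : ℓ - 1 ≤ (e ∩ e').card)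
    (hf : f ∈ E) (hvf : v ∉ f) (hve : v ∉ e) (hve' : v ∉ e')
    (hX : Full ℓ E (insert v f)) (hfe : ℓ - 1 ≤ (f ∩ e).card) :
    ∃ f' ∈ E, v ∉ f' ∧ Full ℓ E (insert v f') ∧ ℓ - 1 ≤ (f' ∩ e').card := by
  by_cases hfull : Full ℓ E (insert v e)
  · exact ⟨e, he, hve, hfull, hee'⟩
  have hfne : f ≠ e := fun h => hfull (h ▸ hX)
  set T := f ∩ e with hTdef
  have hT : T.card = ℓ - 1 := inter_card_of_ne hunif hf he hfne hfe
  obtain ⟨a, hae, haT, hfeq⟩ := pair_decomp hℓ hunif hf he hfne hfe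
  have hef_card : ℓ - 1 ≤ (e ∩ f).card := by rwa [inter_comm]
  obtain ⟨c, hcf, hcT', heeq'⟩ := pair_decomp hℓ hunif he hf (Ne.symm hfne) hef_card
  have hcT : c ∉ T := by rw [hTdef, inter_comm]; exact hcT'
  have heeq : e = insert c T := by rw [hTdef, inter_comm]; exact heeq'
  have hTf : T ⊆ f := inter_subset_left
  have hTe : T ⊆ e := inter_subset_right
  have hvT : v ∉ T := fun h => hvf (hTf h)
  have haf : a ∈ f := hfeq ▸ mem_insert_self a T
  have hce : c ∈ e := heeq ▸ mem_insert_self c T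
  have hva : v ≠ a := fun h => hvf (h ▸ haf)
  have hvc : v ≠ c := fun h => hve (h ▸ hce)
  have hac : a ≠ c := fun h => hae (h ▸ hce)
  have hXa : Full ℓ E (insert v (insert a T)) := by rwa [hfeq] at hX
  have hgE : insert c T ∈ E := heeq ▸ he
  have hng : ¬ Full ℓ E (insert v (insert c T)) := by rwa [heeq] at hfull
  have hfE' : insert a T ∈ E := hfeq ▸ hf
  by_cases heeq2 : e = e'
  · exact ⟨f, hf, hvf, hX, heeq2 ▸ hfe⟩
  · obtain ⟨t, hte', htI, hteq⟩ := pair_decomp hℓ hunif he he' heeq2 hee'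
    have hte : t ∈ e := hteq ▸ mem_insert_self t _
    have hee'sub : ∀ u ∈ e, u ≠ t → u ∈ e' := by
      intro u hu hut
      rw [hteq] at hu
      rcases mem_insert.mp hu with rfl | h
      · exact absurd rfl hut
      · exact mem_of_mem_inter_right h
    by_cases htc : t = c
    · refine ⟨f, hf, hvf, hX, ?_⟩
      have hsub : T ⊆ f ∩ e' := by
        intro u hu
        exact mem_inter.mpr ⟨hTf hu, hee'sub u (hTe hu) (fun h => hcT (htc ▸ h ▸ hu))⟩
      calc ℓ - 1 = T.card := hT.symm
        _ ≤ (f ∩ e').card := card_le_card hsub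
    · have htT : t ∈ T := by
        rw [heeq] at hte
        rcases mem_insert.mp hte with h | h
        · exact absurd h htc
        · exact h
      by_cases hbeta : insert a (insert c (T.erase t)) ∈ E
      · refine ⟨_, hbeta, ?_, ?_, ?_⟩
        · simp only [mem_insert, mem_erase]
          push_neg
          exact ⟨hva, hvc, fun _ h => hvT h⟩
        · exact core_G hℓ hunif hdisp hT haT hcT hvT hac hva hvc hgE hXa hng htT hbeta
        · have hsub : insert c (T.erase t) ⊆ insert a (insert c (T.erase t)) ∩ e' := by
            intro u hu
            refine mem_inter.mpr ⟨subset_insert _ _ hu, ?_⟩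
            rcases mem_insert.mp hu with rfl | h
            · exact hee'sub u hce (fun h2 => htc h2.symm)
            · exact hee'sub u (hTe (mem_of_mem_erase h)) (mem_erase.mp h).1
          have hc1 : c ∉ T.erase t := fun h => hcT (mem_of_mem_erase h)
          have : (insert c (T.erase t)).card = ℓ - 1 := by
            rw [card_insert_of_notMem hc1, card_erase_of_mem htT, hT]; omega
          calc ℓ - 1 = (insert c (T.erase t)).card := this.symm
            _ ≤ _ := card_le_card hsub
      · exfalso
        have hTt_pos : 0 < (T.erase t).card := by
          rw [card_erase_of_mem htT, hT]; omega
        obtain ⟨x, hxe⟩ := card_pos.mp hTt_pos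
        have hxT : x ∈ T := mem_of_mem_erase hxe
        have hxt : x ≠ t := (mem_erase.mp hxe).1
        have hY : Full ℓ E (f ∪ e) := by
          refine full_of_two_edges hunif hdisp hf he subset_union_left
            subset_union_right hfne ?_
          have h1 := card_union_add_card_inter f e
          have h2 := hunif f hf
          have h3 := hunif e he
          rw [← hTdef] at h1
          omega
        have hcard_beta : ∀ w ∈ T, (insert a (insert c (T.erase w))).card = ℓ := by
          intro w hw
          have h1 : c ∉ T.erase w := fun h => hcT (mem_of_mem_erase h)
          have h2 : a ∉ insert c (T.erase w) := by
            simp only [mem_insert, mem_erase]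
            push_neg
            exact ⟨hac, fun _ h => haT h⟩
          rw [card_insert_of_notMem h2, card_insert_of_notMem h1, card_erase_of_mem hw, hT]
          omega
        have hsub_beta : ∀ w : V, insert a (insert c (T.erase w)) ⊆ f ∪ e := by
          intro w u hu
          rcases mem_insert.mp hu with rfl | hu2
          · exact mem_union_left _ haf
          rcases mem_insert.mp hu2 with rfl | hu3
          · exact mem_union_right _ hce
          · exact mem_union_left _ (hTf (mem_of_mem_erase hu3))
        have hβx : insert a (insert c (T.erase x)) ∈ E := by
          refine hY.pair (S := insert a (insert c (T.erase t))) (hsub_beta t) (hsub_beta x)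
            (hcard_beta t htT) (hcard_beta x hxT) ?_ hbeta
          intro heq2
          have ht2 : t ∈ insert a (insert c (T.erase x)) := by
            simp only [mem_insert, mem_erase]
            exact Or.inr (Or.inr ⟨fun h => hxt h.symm, htT⟩)
          rw [← heq2] at ht2
          simp only [mem_insert, mem_erase] at ht2
          rcases ht2 with h | h | h
          · exact haT (h ▸ htT)
          · exact hcT (h ▸ htT)
          · exact h.1 rfl
        have hK := core_K hℓ hunif hdisp hT haT hcT hvT hac hva hvc hgE hXa hng hxT htT hxt hβx
        have hq_t := core_q hℓ hunif hdisp hT haT hcT hvT hac hva hvc hgE hXa hng htT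
        have hγt : insert v (insert c (T.erase t)) ∉ E := by
          refine not_full_insert hunif hdisp he hve (hunif e he) hfull ?_ ?_ ?_
          · intro u hu
            rcases mem_insert.mp hu with rfl | hu2
            · exact mem_insert_self u _
            refine mem_insert_of_mem ?_
            rcases mem_insert.mp hu2 with rfl | hu3
            · exact hce
            · exact hTe (mem_of_mem_erase hu3)
          · have h1 : c ∉ T.erase t := fun h => hcT (mem_of_mem_erase h)
            have h2 : v ∉ insert c (T.erase t) := by
              simp only [mem_insert, mem_erase]
              push_neg
              exact ⟨hvc, fun _ h => hvT h⟩
            rw [card_insert_of_notMem h2, card_insert_of_notMem h1, card_erase_of_mem htT, hT]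
            omega
          · intro heq2
            have : v ∈ e := heq2 ▸ mem_insert_self v _
            exact hve this
        -- Q is full
        have hQ : Full ℓ E (insert v (insert a (insert c (T.erase t)))) := by
          refine full_of_two_edges hunif hdisp hK hq_t ?_ ?_ ?_ ?_
          · intro u hu
            simp only [mem_insert, mem_erase] at hu ⊢
            tauto
          · intro u hu
            simp only [mem_insert, mem_erase] at hu ⊢
            tauto
          · intro heq2
            have hc2 : c ∈ insert a (insert v (T.erase t)) := by
              rw [← heq2]
              simp only [mem_insert, mem_erase]
              tauto
            simp only [mem_insert, mem_erase] at hc2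
            rcases hc2 with h | h | h
            · exact hac h.symm
            · exact hvc h.symm
            · exact hcT h.2
          · have h2 : v ∉ insert a (insert c (T.erase t)) := by
              simp only [mem_insert, mem_erase]
              push_neg
              exact ⟨hva, hvc, fun _ h => hvT h⟩
            rw [card_insert_of_notMem h2, hcard_beta t htT]
        have hfinal := hQ.pair (S := insert a (insert c (T.erase t)))
          (S' := insert v (insert c (T.erase t))) (subset_insert _ _) ?_
          (hcard_beta t htT) ?_ ?_ hbeta
        · exact hγt hfinal
        · intro u hu
          simp only [mem_insert, mem_erase] at hu ⊢
          tauto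
        · have h1 : c ∉ T.erase t := fun h => hcT (mem_of_mem_erase h)
          have h2 : v ∉ insert c (T.erase t) := by
            simp only [mem_insert, mem_erase]
            push_neg
            exact ⟨hvc, fun _ h => hvT h⟩
          rw [card_insert_of_notMem h2, card_insert_of_notMem h1, card_erase_of_mem htT, hT]
          omega
        · intro heq2
          have ha2 : a ∈ insert v (insert c (T.erase t)) := by
            rw [← heq2]
            simp only [mem_insert]
            tauto
          simp only [mem_insert, mem_erase] at ha2
          rcases ha2 with h | h | h
          · exact hva h.symm
          · exact hac h
          · exact haT h.2

/-- A tight walk starting at an edge containing `A` and ending at the edge `e`. -/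
def ConnTo (ℓ : ℕ) (E : Finset (Finset V)) (A e : Finset V) : Prop :=
  ∃ ws : List (Finset V), ∃ h : ws ≠ [],
    (∀ x ∈ ws, x ∈ E) ∧ ws.Chain' (fun a b => ℓ - 1 ≤ (a ∩ b).card) ∧
    A ⊆ ws.head h ∧ ws.getLast h = e

lemma connTo_single {A e : Finset V} (hA : A ⊆ e) (he : e ∈ E) : ConnTo ℓ E A e :=
  ⟨[e], by simp, by simp [he], List.isChain_singleton e, hA, rfl⟩

lemma connTo_extend {A e : Finset V} (hc : ConnTo ℓ E A e) {ws₂ : List (Finset V)}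
    (h₂ : ws₂ ≠ []) (hE₂ : ∀ x ∈ ws₂, x ∈ E)
    (hch₂ : ws₂.Chain' (fun a b => ℓ - 1 ≤ (a ∩ b).card))
    (hjoin : ℓ - 1 ≤ (e ∩ ws₂.head h₂).card) : ConnTo ℓ E A (ws₂.getLast h₂) := by
  obtain ⟨ws, h, hE, hch, hhead, hlast⟩ := hc
  refine ⟨ws ++ ws₂, List.append_ne_nil_of_left_ne_nil h ws₂, ?_, ?_, ?_, ?_⟩
  · intro x hx
    rcases List.mem_append.mp hx with h1 | h1
    · exact hE x h1
    · exact hE₂ x h1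
  · refine List.IsChain.append hch hch₂ ?_
    intro x hx y hy
    rw [List.getLast?_eq_getLast h] at hx
    rw [List.head?_eq_head h₂] at hy
    simp only [Option.mem_def, Option.some_inj] at hx hy
    rw [← hx, ← hy, hlast]
    exact hjoin
  · rw [List.head_append_left h]
    exact hhead
  · have := List.getLast_append_of_ne_nil (l := ws) (List.append_ne_nil_of_left_ne_nil h ws₂) h₂
    simpa using this

lemma connTo_step {A e e' : Finset V} (hc : ConnTo ℓ E A e) (he' : e' ∈ E)
    (hR : ℓ - 1 ≤ (e ∩ e').card) : ConnTo ℓ E A e' := by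
  have := connTo_extend (ws₂ := [e']) hc (by simp) (by simp [he'])
    (List.isChain_singleton e') (by simpa using hR)
  simpa using this

/-- the invariant transported along a walk: `v` either lies in the edge, or there
is an edge `f` whose extension by `v` is full, tightly adjacent to the edge. -/
def Inv (ℓ : ℕ) (E : Finset (Finset V)) (v : V) (e : Finset V) : Prop :=
  v ∈ e ∨ ∃ f ∈ E, v ∉ f ∧ Full ℓ E (insert v f) ∧ ℓ - 1 ≤ (f ∩ e).card

lemma inv_step (hℓ : 3 ≤ ℓ) (hunif : ∀ e ∈ E, e.card = ℓ) (hdisp : Disperse ℓ E)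
    {x y : Finset V} {v : V} (hx : x ∈ E) (hy : y ∈ E)
    (hR : ℓ - 1 ≤ (x ∩ y).card) (hinv : Inv ℓ E v y) : Inv ℓ E v x := by
  by_cases hvx : v ∈ x
  · exact Or.inl hvx
  by_cases hvy : v ∈ y
  · have hxy : x ≠ y := fun h => hvx (h ▸ hvy)
    have hicard : (x ∩ y).card = ℓ - 1 := inter_card_of_ne hunif hx hy hxy hR
    have hsd : (y \ x).card = 1 := by
      have h1 := card_inter_add_card_sdiff y x
      have h2 := hunif y hy
      rw [inter_comm] at h1
      omega
    have hyx : y \ x = {v} := by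
      obtain ⟨w, hw⟩ := card_eq_one.mp hsd
      have hv : v ∈ y \ x := mem_sdiff.mpr ⟨hvy, hvx⟩
      rw [hw] at hv ⊢
      rw [mem_singleton.mp hv]
    have hysub : y ⊆ insert v x := by
      intro u hu
      by_cases hux : u ∈ x
      · exact mem_insert_of_mem hux
      · have : u ∈ y \ x := mem_sdiff.mpr ⟨hu, hux⟩
        rw [hyx, mem_singleton] at this
        rw [this]
        exact mem_insert_self v x
    have hfull : Full ℓ E (insert v x) := by
      refine full_of_two_edges hunif hdisp hy hx hysub (subset_insert v x)
        (Ne.symm hxy) ?_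
      rw [card_insert_of_notMem hvx, hunif x hx]
    refine Or.inr ⟨x, hx, hvx, hfull, ?_⟩
    rw [inter_self, hunif x hx]
    omega
  · rcases hinv with h | ⟨f, hf, hvf, hfull, hfy⟩
    · exact absurd h hvy
    · have hRyx : ℓ - 1 ≤ (y ∩ x).card := by rwa [inter_comm]
      obtain ⟨f', hf', hvf', hfull', hr⟩ :=
        lam_step hℓ hunif hdisp hy hx hRyx hf hvf hvy hvx hfull hfy
      exact Or.inr ⟨f', hf', hvf', hfull', hr⟩

lemma trans_inv (hℓ : 3 ≤ ℓ) (hunif : ∀ e ∈ E, e.card = ℓ) (hdisp : Disperse ℓ E)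
    (v : V) : ∀ (ws : List (Finset V)) (hne : ws ≠ []),
    (∀ x ∈ ws, x ∈ E) → ws.Chain' (fun a b => ℓ - 1 ≤ (a ∩ b).card) →
    Inv ℓ E v (ws.getLast hne) → Inv ℓ E v (ws.head hne) := by
  intro ws
  induction ws with
  | nil => intro hne; exact absurd rfl hne
  | cons p tl ih =>
    intro hne hE hch hlast
    cases tl with
    | nil => simpa using hlast
    | cons q tl' =>
      have hne' : (q :: tl') ≠ [] := by simp
      have hstep := List.isChain_cons_cons.mp hch
      have hE' : ∀ x ∈ q :: tl', x ∈ E := fun x hx => hE x (List.mem_cons_of_mem _ hx)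
      have hlast' : Inv ℓ E v ((q :: tl').getLast hne') := by
        have : (p :: q :: tl').getLast hne = (q :: tl').getLast hne' :=
          List.getLast_cons hne'
        rwa [this] at hlast
      have hinvq := ih hne' hE' hstep.2 hlast'
      have hq : q ∈ E := hE' q (by simp)
      have hp : p ∈ E := hE p (by simp)
      exact inv_step hℓ hunif hdisp hp hq hstep.1 hinvq

lemma final_step (hℓ : 3 ≤ ℓ) (hunif : ∀ e ∈ E, e.card = ℓ) (hdisp : Disperse ℓ E)
    {f g A₀ : Finset V} {v : V}
    (hf : f ∈ E) (hg : g ∈ E) (hvf : v ∉ f) (hvg : v ∉ g)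
    (hX : Full ℓ E (insert v f)) (hfg : ℓ - 1 ≤ (f ∩ g).card)
    (hA₀g : A₀ ⊆ g) (hA₀c : A₀.card = ℓ - 2) : ConnTo ℓ E (insert v A₀) g := by
  have hvA₀ : v ∉ A₀ := fun h => hvg (hA₀g h)
  have hAc : (insert v A₀).card = ℓ - 1 := by
    rw [card_insert_of_notMem hvA₀, hA₀c]; omega
  by_cases hfullg : Full ℓ E (insert v g)
  · obtain ⟨gs, hgsE, hgsub, hgsubX⟩ :=
      cover_of_full hℓ hfullg (insert_subset_insert v hA₀g) hAc
    refine ⟨[gs, g], by simp, ?_, ?_, hgsub, rfl⟩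
    · intro z hz
      simp only [List.mem_cons, List.not_mem_nil, or_false] at hz
      rcases hz with rfl | rfl
      · exact hgsE
      · exact hg
    · change List.IsChain _ _; rw [List.isChain_pair]
      exact inter_ge_in_full hfullg.1 hgsubX (subset_insert v g) (hunif gs hgsE) (hunif g hg)
  have hfgne : f ≠ g := fun h => hfullg (h ▸ hX)
  set T := f ∩ g with hTdef
  have hT : T.card = ℓ - 1 := inter_card_of_ne hunif hf hg hfgne hfg
  obtain ⟨a, hag, haT, hfeq⟩ := pair_decomp hℓ hunif hf hg hfgne hfg
  have hgf_card : ℓ - 1 ≤ (g ∩ f).card := by rwa [inter_comm]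
  obtain ⟨c, hcf, hcT', hgeq'⟩ := pair_decomp hℓ hunif hg hf (Ne.symm hfgne) hgf_card
  have hcT : c ∉ T := by rw [hTdef, inter_comm]; exact hcT'
  have hgeq : g = insert c T := by rw [hTdef, inter_comm]; exact hgeq'
  have hTf : T ⊆ f := inter_subset_left
  have hTg : T ⊆ g := inter_subset_right
  have hvT : v ∉ T := fun h => hvf (hTf h)
  have haf : a ∈ f := hfeq ▸ mem_insert_self a T
  have hcg : c ∈ g := hgeq ▸ mem_insert_self c T
  have hva : v ≠ a := fun h => hvf (h ▸ haf)
  have hvc : v ≠ c := fun h => hvg (h ▸ hcg)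
  have hac : a ≠ c := fun h => hag (h ▸ hcg)
  have hXa : Full ℓ E (insert v (insert a T)) := by rwa [hfeq] at hX
  have hgE' : insert c T ∈ E := hgeq ▸ hg
  have hng : ¬ Full ℓ E (insert v (insert c T)) := by rwa [hgeq] at hfullg
  by_cases hcA : c ∈ A₀
  · -- the hard case
    set S₀ := A₀.erase c with hS₀def
    have hS₀T : S₀ ⊆ T := by
      intro u hu
      obtain ⟨huc, huA⟩ := mem_erase.mp hu
      have : u ∈ insert c T := hgeq ▸ hA₀g huA
      rcases mem_insert.mp this with h | h
      · exact absurd h huc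
      · exact h
    have hS₀c : S₀.card = ℓ - 3 := by
      rw [hS₀def, card_erase_of_mem hcA, hA₀c]
      omega
    have hTS₀ : (T \ S₀).card = 2 := by
      rw [card_sdiff_of_subset hS₀T, hT, hS₀c]; omega
    obtain ⟨x, x', hxx', hset⟩ := card_eq_two.mp hTS₀
    have hxmem : x ∈ T \ S₀ := by rw [hset]; simp
    have hx'mem : x' ∈ T \ S₀ := by rw [hset]; simp
    have hxT : x ∈ T := (mem_sdiff.mp hxmem).1
    have hx'T : x' ∈ T := (mem_sdiff.mp hx'mem).1
    have hxS₀ : x ∉ S₀ := (mem_sdiff.mp hxmem).2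
    have hx'S₀ : x' ∉ S₀ := (mem_sdiff.mp hx'mem).2
    have herase : ∀ w w' : V, w ∈ T → w ∉ S₀ → w' ∉ S₀ → ({w, w'} : Finset V) = {x, x'} →
        (T.erase w).erase w' = S₀ := by
      intro w w' hwT hwS hw'S hpair
      ext u
      simp only [mem_erase]
      constructor
      · rintro ⟨huw', huw, huT⟩
        by_contra huS₀
        have hu2 : u ∈ T \ S₀ := mem_sdiff.mpr ⟨huT, huS₀⟩
        rw [← hpair] at hset
        rw [hset] at hu2
        simp only [mem_insert, mem_singleton] at hu2
        tauto
      · intro hu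
        have huT : u ∈ T := hS₀T hu
        exact ⟨fun h => hw'S (h ▸ hu), fun h => hwS (h ▸ hu), huT⟩
    have hcard_beta : ∀ w ∈ T, (insert a (insert c (T.erase w))).card = ℓ := by
      intro w hw
      have h1 : c ∉ T.erase w := fun h => hcT (mem_of_mem_erase h)
      have h2 : a ∉ insert c (T.erase w) := by
        simp only [mem_insert, mem_erase]
        push_neg
        exact ⟨hac, fun _ h => haT h⟩
      rw [card_insert_of_notMem h2, card_insert_of_notMem h1, card_erase_of_mem hw, hT]
      omega
    have hsub_beta : ∀ w : V, insert a (insert c (T.erase w)) ⊆ f ∪ g := by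
      intro w u hu
      rcases mem_insert.mp hu with rfl | hu2
      · exact mem_union_left _ haf
      rcases mem_insert.mp hu2 with rfl | hu3
      · exact mem_union_right _ hcg
      · exact mem_union_left _ (hTf (mem_of_mem_erase hu3))
    have hgen : ∀ w w' : V, w ∈ T → w' ∈ T → w ≠ w' → (T.erase w).erase w' = S₀ →
        insert a (insert c (T.erase w)) ∈ E → ConnTo ℓ E (insert v A₀) g := by
      intro w w' hwT hw'T hww' hSeq hβ
      have hq := core_q hℓ hunif hdisp hT haT hcT hvT hac hva hvc hgE' hXa hng hwT
      have hK := core_K hℓ hunif hdisp hT haT hcT hvT hac hva hvc hgE' hXa hng hwT hw'T hww' hβ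
      rw [hSeq] at hK
      have hwS₀ : w ∉ S₀ := by
        rw [← hSeq]
        intro h
        exact (mem_erase.mp (mem_erase.mp h).2).1 rfl
      have hAK : insert v A₀ ⊆ insert v (insert a (insert c S₀)) := by
        intro u hu
        rcases mem_insert.mp hu with rfl | hu2
        · exact mem_insert_self u _
        refine mem_insert_of_mem (mem_insert_of_mem ?_)
        by_cases huc : u = c
        · rw [huc]; exact mem_insert_self c S₀
        · exact mem_insert_of_mem (mem_erase.mpr ⟨huc, hu2⟩)
      refine ⟨[insert v (insert a (insert c S₀)), insert a (insert v (T.erase w)), f, g],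
        by simp, ?_, ?_, hAK, rfl⟩
      · intro z hz
        simp only [List.mem_cons, List.not_mem_nil, or_false] at hz
        rcases hz with rfl | rfl | rfl | rfl
        · exact hK
        · exact hq
        · exact hf
        · exact hg
      · change List.IsChain _ _; rw [List.isChain_cons_cons, List.isChain_cons_cons, List.isChain_pair]
        refine ⟨?_, ?_, hfg⟩
        · -- R K q
          have hsub : insert a (insert v S₀) ⊆
              insert v (insert a (insert c S₀)) ∩ insert a (insert v (T.erase w)) := by
            intro u hu
            refine mem_inter.mpr ⟨?_, ?_⟩
            · rcases mem_insert.mp hu with rfl | hu2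
              · exact mem_insert_of_mem (mem_insert_self u _)
              rcases mem_insert.mp hu2 with rfl | hu3
              · exact mem_insert_self u _
              · exact mem_insert_of_mem (mem_insert_of_mem (mem_insert_of_mem hu3))
            · rcases mem_insert.mp hu with rfl | hu2
              · exact mem_insert_self u _
              rcases mem_insert.mp hu2 with rfl | hu3
              · exact mem_insert_of_mem (mem_insert_self u _)
              · refine mem_insert_of_mem (mem_insert_of_mem (mem_erase.mpr
                  ⟨fun h => hwS₀ (h ▸ hu3), hS₀T hu3⟩))
          have hcard : (insert a (insert v S₀)).card = ℓ - 1 := by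
            have h1 : v ∉ S₀ := fun h => hvT (hS₀T h)
            have h2 : a ∉ insert v S₀ := by
              simp only [mem_insert]
              push_neg
              exact ⟨fun h => hva h.symm, fun h => haT (hS₀T h)⟩
            rw [card_insert_of_notMem h2, card_insert_of_notMem h1, hS₀c]
            omega
          calc ℓ - 1 = (insert a (insert v S₀)).card := hcard.symm
            _ ≤ _ := card_le_card hsub
        · -- R q f
          have hsub : insert a (T.erase w) ⊆ insert a (insert v (T.erase w)) ∩ f := by
            intro u hu
            refine mem_inter.mpr ⟨?_, ?_⟩
            · rcases mem_insert.mp hu with rfl | hu2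
              · exact mem_insert_self u _
              · exact mem_insert_of_mem (mem_insert_of_mem hu2)
            · rcases mem_insert.mp hu with rfl | hu2
              · exact haf
              · exact hTf (mem_of_mem_erase hu2)
          have hcard : (insert a (T.erase w)).card = ℓ - 1 := by
            have h2 : a ∉ T.erase w := fun h => haT (mem_of_mem_erase h)
            rw [card_insert_of_notMem h2, card_erase_of_mem hwT, hT]
            omega
          calc ℓ - 1 = (insert a (T.erase w)).card := hcard.symm
            _ ≤ _ := card_le_card hsub
    -- pick which beta is an edge
    have hY : Full ℓ E (f ∪ g) := by
      refine full_of_two_edges hunif hdisp hf hg subset_union_left subset_union_right hfgne ?_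
      have h1 := card_union_add_card_inter f g
      have h2 := hunif f hf
      have h3 := hunif g hg
      rw [← hTdef] at h1
      omega
    have hbne : insert a (insert c (T.erase x)) ≠ insert a (insert c (T.erase x')) := by
      intro heq2
      have hx2 : x' ∈ insert a (insert c (T.erase x)) := by
        simp only [mem_insert, mem_erase]
        exact Or.inr (Or.inr ⟨fun h => hxx' h.symm, hx'T⟩)
      rw [heq2] at hx2
      simp only [mem_insert, mem_erase] at hx2
      rcases hx2 with h | h | h
      · exact haT (h ▸ hx'T)
      · exact hcT (h ▸ hx'T)
      · exact h.1 rfl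
    rcases hY.2 _ _ (hsub_beta x) (hsub_beta x') (hcard_beta x hxT) (hcard_beta x' hx'T)
      hbne with hβ | hβ
    · exact hgen x x' hxT hx'T hxx' (herase x x' hxT hxS₀ hx'S₀ rfl) hβ
    · refine hgen x' x hx'T hxT (Ne.symm hxx') (herase x' x hx'T hx'S₀ hxS₀ ?_) hβ
      ext u; simp only [mem_insert, mem_singleton]; tauto
  · -- c ∉ A₀ : everything sits inside insert v f
    have hA₀T : A₀ ⊆ T := by
      intro u hu
      have : u ∈ insert c T := hgeq ▸ hA₀g hu
      rcases mem_insert.mp this with h | h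
      · exact absurd h (fun h2 => hcA (h ▸ hu)) -- u = c contradiction
      · exact h
    obtain ⟨gs, hgsE, hgsub, hgsubX⟩ := cover_of_full hℓ hX
      (insert_subset_insert v (hA₀T.trans hTf)) hAc
    refine ⟨[gs, f, g], by simp, ?_, ?_, hgsub, rfl⟩
    · intro z hz
      simp only [List.mem_cons, List.not_mem_nil, or_false] at hz
      rcases hz with rfl | rfl | rfl
      · exact hgsE
      · exact hf
      · exact hg
    · change List.IsChain _ _; rw [List.isChain_cons_cons, List.isChain_pair]
      exact ⟨inter_ge_in_full hX.1 hgsubX (subset_insert v f) (hunif gs hgsE) (hunif f hf), hfg⟩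

lemma main_walk (hℓ : 3 ≤ ℓ) (hunif : ∀ e ∈ E, e.card = ℓ) (hdisp : Disperse ℓ E) :
    ∀ (es : List (Finset V)) (hne : es ≠ []), (∀ e ∈ es, e ∈ E) →
      es.Chain' (fun a b => ℓ - 1 ≤ (a ∩ b).card) →
      ∀ A : Finset V, A ⊆ es.foldr (· ∪ ·) ∅ → A.card = ℓ - 1 →
      ConnTo ℓ E A (es.head hne) := by
  intro es
  induction es with
  | nil => intro hne; exact absurd rfl hne
  | cons e₁ tl ih =>
    intro hne hE hch A hA hAc
    cases tl with
    | nil =>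
      have hAe : A ⊆ e₁ := by
        intro u hu
        have := hA hu
        simpa using this
      exact connTo_single hAe (hE e₁ (by simp))
    | cons e₂ tl' =>
      have hne' : (e₂ :: tl') ≠ [] := by simp
      have hE' : ∀ e ∈ e₂ :: tl', e ∈ E := fun e he => hE e (List.mem_cons_of_mem _ he)
      have hch12 : ℓ - 1 ≤ (e₁ ∩ e₂).card := (List.isChain_cons_cons.mp hch).1
      have hch' := (List.isChain_cons_cons.mp hch).2
      have he₁ : e₁ ∈ E := hE e₁ (by simp)
      have he₂ : e₂ ∈ E := hE e₂ (by simp)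
      have hAsub : A ⊆ e₁ ∪ (e₂ :: tl').foldr (· ∪ ·) ∅ := hA
      have he₂U : e₂ ⊆ (e₂ :: tl').foldr (· ∪ ·) ∅ := subset_union_left
      by_cases hAU : A ⊆ (e₂ :: tl').foldr (· ∪ ·) ∅
      · have h1 := ih hne' hE' hch' A hAU hAc
        simp only [List.head_cons] at h1
        exact connTo_step h1 he₁ (by rwa [inter_comm])
      · obtain ⟨v, hvA, hvU⟩ := not_subset.mp hAU
        have hve₂ : v ∉ e₂ := fun h => hvU (he₂U h)
        have hve₁ : v ∈ e₁ := by
          rcases mem_union.mp (hAsub hvA) with h | h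
          · exact h
          · exact absurd h hvU
        have hne12 : e₁ ≠ e₂ := fun h => hve₂ (h ▸ hve₁)
        have hi12 : (e₁ ∩ e₂).card = ℓ - 1 := inter_card_of_ne hunif he₁ he₂ hne12 hch12
        have hsd1 : (e₁ \ e₂).card = 1 := by
          have h1 := card_inter_add_card_sdiff e₁ e₂
          have h2 := hunif e₁ he₁
          omega
        have he₁sub : e₁ ⊆ insert v e₂ := by
          obtain ⟨w, hw⟩ := card_eq_one.mp hsd1
          have hv1 : v ∈ e₁ \ e₂ := mem_sdiff.mpr ⟨hve₁, hve₂⟩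
          rw [hw, mem_singleton] at hv1
          intro u hu
          by_cases hu2 : u ∈ e₂
          · exact mem_insert_of_mem hu2
          · have : u ∈ e₁ \ e₂ := mem_sdiff.mpr ⟨hu, hu2⟩
            rw [hw, mem_singleton] at this
            rw [this, ← hv1]
            exact mem_insert_self v e₂
        have hX₀ : Full ℓ E (insert v e₂) := by
          refine full_of_two_edges hunif hdisp he₁ he₂ he₁sub (subset_insert v e₂) hne12 ?_
          rw [card_insert_of_notMem hve₂, hunif e₂ he₂]
        have hA₀c : (A.erase v).card = ℓ - 2 := by
          rw [card_erase_of_mem hvA, hAc]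
          omega
        have hA₀U : A.erase v ⊆ (e₂ :: tl').foldr (· ∪ ·) ∅ := by
          intro u hu
          obtain ⟨huv, huA⟩ := mem_erase.mp hu
          rcases mem_union.mp (hAsub huA) with h | h
          · have := he₁sub h
            rcases mem_insert.mp this with h2 | h2
            · exact absurd h2 huv
            · exact he₂U h2
          · exact h
        obtain ⟨y, hye₂, hyA₀⟩ : ∃ y ∈ e₂, y ∉ A.erase v := by
          by_contra hcon
          push_neg at hcon
          have hsub : e₂ ⊆ A.erase v := hcon
          have := card_le_card hsub
          rw [hA₀c, hunif e₂ he₂] at this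
          omega
        have hBc : (insert y (A.erase v)).card = ℓ - 1 := by
          rw [card_insert_of_notMem hyA₀, hA₀c]; omega
        have hBU : insert y (A.erase v) ⊆ (e₂ :: tl').foldr (· ∪ ·) ∅ :=
          insert_subset (he₂U hye₂) hA₀U
        obtain ⟨ws, hwne, hwE, hwch, hBhead, hwlast⟩ := ih hne' hE' hch' _ hBU hBc
        simp only [List.head_cons] at hwlast
        have hgE : ws.head hwne ∈ E := hwE _ (List.head_mem hwne)
        have hA₀head : A.erase v ⊆ ws.head hwne := fun u hu => hBhead (mem_insert_of_mem hu)
        have hinv_last : Inv ℓ E v (ws.getLast hwne) := by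
          rw [hwlast]
          refine Or.inr ⟨e₂, he₂, hve₂, hX₀, ?_⟩
          rw [inter_self, hunif e₂ he₂]
          omega
        have hinv := trans_inv hℓ hunif hdisp v ws hwne hwE hwch hinv_last
        have hAeq : insert v (A.erase v) = A := insert_erase hvA
        by_cases hvg : v ∈ ws.head hwne
        · have hAg : A ⊆ ws.head hwne := by
            rw [← hAeq]
            exact insert_subset hvg hA₀head
          have h1 : ConnTo ℓ E A e₂ := by
            rw [← hwlast]
            exact connTo_extend (connTo_single hAg hgE) hwne hwE hwch
              (by rw [inter_self, hunif _ hgE]; omega)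
          exact connTo_step h1 he₁ (by rwa [inter_comm])
        · rcases hinv with h | ⟨f, hfE, hvf, hfull, hfg⟩
          · exact absurd h hvg
          · have hc := final_step hℓ hunif hdisp hfE hgE hvf hvg hfull hfg hA₀head hA₀c
            rw [hAeq] at hc
            have h2 := connTo_extend hc hwne hwE hwch
              (by rw [inter_self, hunif _ hgE]; omega)
            rw [hwlast] at h2
            exact connTo_step h2 he₁ (by rwa [inter_comm])

end TWProof

open TWProof in
theorem tight_walk_union_one_component {V : Type*} [DecidableEq V] (ℓ : ℕ) (hℓ : 3 ≤ ℓ)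
    (E : Finset (Finset V)) (hunif : ∀ e ∈ E, e.card = ℓ) (hdisp : Disperse ℓ E)
    (es : List (Finset V)) (hne : es ≠ []) (hmem : ∀ e ∈ es, e ∈ E)
    (hchain : es.Chain' (fun a b => ℓ - 1 ≤ (a ∩ b).card)) :
    ∀ A B : Finset V, A ⊆ es.foldr (· ∪ ·) ∅ → B ⊆ es.foldr (· ∪ ·) ∅ →
      A.card = ℓ - 1 → B.card = ℓ - 1 → TightConn ℓ E A B := by
  intro A B hA hB hAc hBc
  obtain ⟨wsA, hA1, hA2, hA3, hA4, hA5⟩ :=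
    main_walk hℓ hunif hdisp es hne hmem hchain A hA hAc
  obtain ⟨wsB, hB1, hB2, hB3, hB4, hB5⟩ :=
    main_walk hℓ hunif hdisp es hne hmem hchain B hB hBc
  have hrevne : wsB.reverse ≠ [] := by simp [hB1]
  have hheadE : es.head hne ∈ E := hmem _ (List.head_mem hne)
  refine ⟨wsA ++ wsB.reverse, fun h => hA1 (List.append_eq_nil_iff.mp h).1, ?_, ?_, ?_, ?_⟩
  · intro e he
    rcases List.mem_append.mp he with h | h
    · exact hA2 e h
    · exact hB2 e (List.mem_reverse.mp h)
  · refine List.IsChain.append hA3 ?_ ?_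
    · refine List.isChain_reverse.mpr (hB3.imp ?_)
      intro a b h
      show ℓ - 1 ≤ (b ∩ a).card
      rwa [inter_comm]
    · intro x hx y hy
      rw [List.getLast?_eq_getLast hA1] at hx
      rw [List.head?_eq_head hrevne] at hy
      simp only [Option.mem_def, Option.some_inj] at hx hy
      have hyv : wsB.reverse.head hrevne = wsB.getLast hB1 := List.head_reverse hrevne
      rw [← hx, ← hy, hA5, hyv, hB5, inter_self, hunif _ hheadE]
      omega
  · rw [List.head_append_left hA1]
    exact hA4
  · have h3 : (wsA ++ wsB.reverse).getLast
        (fun h => hA1 (List.append_eq_nil_iff.mp h).1) = wsB.head hB1 := by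
      rw [List.getLast_append_of_ne_nil _ hrevne]
      exact List.getLast_reverse hrevne
    rw [h3]
    exact hB4
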